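/- Let Δ be a connected triangular configuration embedded into ℝ³ and let t be a triangle of Δ. Then t is incident with exactly two cells of Δ. -/

import Mathlib

open scoped Classical
noncomputable section

/-- Points of `ℝ^d`. -/
abbrev Pt (d : ℕ) : Type := EuclideanSpace ℝ (Fin d)

/-- A triangular configuration embedded into `ℝ^d`: a finite geometric simplicial
complex each of whose faces has at most 3 vertices. -/
structure TriangularConfiguration (d : ℕ) where
  faces : Finset (Finset (Pt d))
  not_empty_mem : ∅ ∉ faces
  indep : ∀ s ∈ faces, AffineIndependent ℝ ((↑) : s → Pt d)
  down_closed : ∀ s ∈ faces, ∀ u ⊆ s, u ≠ ∅ → u ∈ faces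
  inter_subset_convexHull : ∀ s ∈ faces, ∀ u ∈ faces,
    convexHull ℝ (s : Set (Pt d)) ∩ convexHull ℝ (u : Set (Pt d)) ⊆
      convexHull ℝ ((s ∩ u : Finset (Pt d)) : Set (Pt d))
  card_le : ∀ s ∈ faces, s.card ≤ 3

namespace TriangularConfiguration

variable {d : ℕ}

/-- The triangles (2-dimensional faces) of a triangular configuration. -/
def triangles (Δ : TriangularConfiguration d) : Finset (Finset (Pt d)) :=
  Δ.faces.filter fun s => s.card = 3

/-- The edges (1-dimensional faces) of a triangular configuration. -/
def edges (Δ : TriangularConfiguration d) : Finset (Finset (Pt d)) :=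
  Δ.faces.filter fun s => s.card = 2

/-- The type of triangles of `Δ`. -/
abbrev Tri (Δ : TriangularConfiguration d) : Type := {t : Finset (Pt d) // t ∈ Δ.triangles}

/-- The cycle space of `Δ` over `GF(2)`: the kernel of the edge–triangle incidence
matrix of `Δ`. -/
def cycleSpace (Δ : TriangularConfiguration d) : Submodule (ZMod 2) (Δ.Tri → ZMod 2) where
  carrier := {x | ∀ e ∈ Δ.edges, (∑ t : Δ.Tri, if e ⊆ t.1 then x t else 0) = 0}
  zero_mem' := by intro e _; simp
  add_mem' := by
    intro a b ha hb e he
    have h : (∑ t : Δ.Tri, if e ⊆ t.1 then (a + b) t else 0)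
        = (∑ t : Δ.Tri, if e ⊆ t.1 then a t else 0)
          + (∑ t : Δ.Tri, if e ⊆ t.1 then b t else 0) := by
      rw [← Finset.sum_add_distrib]
      refine Finset.sum_congr rfl fun t _ => ?_
      by_cases h : e ⊆ t.1 <;> simp [h]
    rw [h, ha e he, hb e he, add_zero]
  smul_mem' := by
    intro c x hx e he
    have h : (∑ t : Δ.Tri, if e ⊆ t.1 then (c • x) t else 0)
        = c * ∑ t : Δ.Tri, if e ⊆ t.1 then x t else 0 := by
      rw [Finset.mul_sum]
      refine Finset.sum_congr rfl fun t _ => ?_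
      by_cases h : e ⊆ t.1 <;> simp [h]
    rw [h, hx e he, mul_zero]

/-- The underlying point set `|Δ|` of a triangular configuration. -/
def space (Δ : TriangularConfiguration d) : Set (Pt d) :=
  ⋃ s ∈ Δ.faces, convexHull ℝ (s : Set (Pt d))

/-- A cell of `Δ` is a connected component of `ℝ^d \ |Δ|`. -/
def IsCell (Δ : TriangularConfiguration d) (X : Set (Pt d)) : Prop :=
  ∃ x ∈ Δ.spaceᶜ, X = connectedComponentIn Δ.spaceᶜ x

/-- The set of cells of `Δ`. -/
def cells (Δ : TriangularConfiguration d) : Set (Set (Pt d)) := {X | Δ.IsCell X}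

/-- The number of cells of `Δ`. -/
def numCells (Δ : TriangularConfiguration d) : ℕ := Δ.cells.ncard

/-- A triangle `t` is incident with a cell `X` if `t ⊆ cl(X)`. -/
def IncidentCell (Δ : TriangularConfiguration d) (t : Finset (Pt d)) (X : Set (Pt d)) : Prop :=
  Δ.IsCell X ∧ convexHull ℝ (t : Set (Pt d)) ⊆ closure X

/-- A strong boundary: a triangular configuration with at least two cells, every
proper subconfiguration of which has fewer cells. -/
def IsStrongBoundary (C : TriangularConfiguration d) : Prop :=
  2 ≤ C.numCells ∧
    ∀ C' : TriangularConfiguration d, C'.faces ⊂ C.faces → C'.numCells < C.numCells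

/-- A strong boundary of `Δ`: a strong boundary that is a subconfiguration of `Δ`. -/
def IsStrongBoundaryOf (Δ C : TriangularConfiguration d) : Prop :=
  C.IsStrongBoundary ∧ C.faces ⊆ Δ.faces

/-- The inner cell `int C` of a strong boundary `C` (the union of its bounded cells;
for a strong boundary there is exactly one). -/
def intCell (C : TriangularConfiguration d) : Set (Pt d) :=
  ⋃₀ {X | C.IsCell X ∧ Bornology.IsBounded X}

/-- The outer cell `ext C` of a strong boundary `C` (the union of its unbounded cells;
for a strong boundary there is exactly one). -/
def extCell (C : TriangularConfiguration d) : Set (Pt d) :=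
  ⋃₀ {X | C.IsCell X ∧ ¬Bornology.IsBounded X}

/-- An elementary strong boundary of `Δ`. -/
def IsElementary (Δ C : TriangularConfiguration d) : Prop :=
  IsStrongBoundaryOf Δ C ∧
    ∀ C' : TriangularConfiguration d, IsStrongBoundaryOf Δ C' →
      ¬((C.intCell ∩ C'.intCell).Nonempty ∧ (C.intCell ∩ C'.extCell).Nonempty)

/-- `Δ` is connected if every two triangles of `Δ` belong to a common strong
boundary of `Δ`. -/
def Connected (Δ : TriangularConfiguration d) : Prop :=
  ∀ t₁ ∈ Δ.triangles, ∀ t₂ ∈ Δ.triangles,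
    ∃ C : TriangularConfiguration d, IsStrongBoundaryOf Δ C ∧ t₁ ∈ C.faces ∧ t₂ ∈ C.faces

/-- The characteristic vector in `GF(2)^{T(Δ)}` of a subconfiguration `C` of `Δ`. -/
def chi (Δ C : TriangularConfiguration d) : Δ.Tri → ZMod 2 :=
  fun t => if t.1 ∈ C.faces then 1 else 0

/-- The set of characteristic vectors of elementary strong boundaries of `Δ`. -/
def esbVectors (Δ : TriangularConfiguration d) : Set (Δ.Tri → ZMod 2) :=
  {x | ∃ C : TriangularConfiguration d, IsElementary Δ C ∧ x = Δ.chi C}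

/-- The configuration `Δ` with the (2-dimensional) triangle face `t` removed,
keeping all other faces of `Δ`. -/
def eraseTriangle (Δ : TriangularConfiguration d) (t : Finset (Pt d))
    (ht : t ∈ Δ.triangles) : TriangularConfiguration d where
  faces := Δ.faces.erase t
  not_empty_mem h := Δ.not_empty_mem (Finset.mem_of_mem_erase h)
  indep s hs := Δ.indep s (Finset.mem_of_mem_erase hs)
  down_closed := by
    intro s hs u hu hune
    have hsf : s ∈ Δ.faces := Finset.mem_of_mem_erase hs
    refine Finset.mem_erase.2 ⟨?_, Δ.down_closed s hsf u hu hune⟩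
    rintro rfl
    have htc : u.card = 3 := (Finset.mem_filter.1 ht).2
    have hsc : s.card ≤ 3 := Δ.card_le s hsf
    have : u = s := Finset.eq_of_subset_of_card_le hu (by omega)
    exact (Finset.mem_erase.1 hs).1 this.symm
  inter_subset_convexHull s hs u hu :=
    Δ.inter_subset_convexHull s (Finset.mem_of_mem_erase hs) u (Finset.mem_of_mem_erase hu)
  card_le s hs := Δ.card_le s (Finset.mem_of_mem_erase hs)

/-- The subconfiguration `K(E)` of `Δ` generated by a set `E` of triangles of `Δ`:
the triangles of `E` together with all their faces. -/
def generatedBy (Δ : TriangularConfiguration d) (E : Finset (Finset (Pt d))) :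
    TriangularConfiguration d where
  faces := Δ.faces.filter fun s => ∃ u ∈ E, s ⊆ u
  not_empty_mem h := Δ.not_empty_mem (Finset.mem_filter.1 h).1
  indep s hs := Δ.indep s (Finset.mem_filter.1 hs).1
  down_closed := by
    intro s hs u hu hune
    have h := Finset.mem_filter.1 hs
    obtain ⟨w, hw, hsw⟩ := h.2
    exact Finset.mem_filter.2 ⟨Δ.down_closed s h.1 u hu hune, w, hw, hu.trans hsw⟩
  inter_subset_convexHull s hs u hu :=
    Δ.inter_subset_convexHull s (Finset.mem_filter.1 hs).1 u (Finset.mem_filter.1 hu).1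
  card_le s hs := Δ.card_le s (Finset.mem_filter.1 hs).1

end TriangularConfiguration

/-- A binary linear code (given as a subspace of `GF(2)^ι`) has a 2-basis if it has a
basis in which every coordinate is non-zero in at most two basis vectors. -/
def HasTwoBasis {ι : Type*} (C : Submodule (ZMod 2) (ι → ZMod 2)) : Prop :=
  ∃ B : Finset (ι → ZMod 2),
    LinearIndependent (ZMod 2) (fun b : {x // x ∈ B} => (b : ι → ZMod 2)) ∧
    Submodule.span (ZMod 2) (B : Set (ι → ZMod 2)) = C ∧
    ∀ i : ι, (B.filter fun b => b i ≠ 0).card ≤ 2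

/-- A binary linear code `C ⊆ GF(2)^n` has a geometric representation embeddable into
`ℝ^d` if there is a triangular configuration `Δ` embedded in `ℝ^d` such that
`C = ker Δ / S` for some set `S` of triangles of `Δ` (the coordinates outside `S`
being enumerated by an injection `g`) and `dim C = dim ker Δ`. -/
def HasGeomRep (d n : ℕ) (C : Submodule (ZMod 2) (Fin n → ZMod 2)) : Prop :=
  ∃ (Δ : TriangularConfiguration d) (g : Fin n → Δ.Tri),
    Function.Injective g ∧
    C = Δ.cycleSpace.map (LinearMap.funLeft (ZMod 2) (ZMod 2) g) ∧
    Module.finrank (ZMod 2) C = Module.finrank (ZMod 2) Δ.cycleSpace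

/-- The cut space of a finite graph (possibly with loops and parallel edges) whose `n`
edges are given by their endpoints `ends : Fin n → Sym2 V`: the span of the incidence
vectors `χ(E(v))`, where `χ(E(v)) i = 1` iff edge `i` is a non-loop edge incident with `v`. -/
def cutSpace {V : Type} [Fintype V] {n : ℕ} (ends : Fin n → Sym2 V) :
    Submodule (ZMod 2) (Fin n → ZMod 2) :=
  Submodule.span (ZMod 2)
    {x | ∃ v : V, x = fun i => if v ∈ ends i ∧ ¬(ends i).IsDiag then (1 : ZMod 2) else 0}



namespace TriangleProof

open Set Metric

/-- A coordinate frame adapted to a triangle `t` in `ℝ³`. -/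
structure Frame (t : Finset (Pt 3)) where
  v : Fin 3 → Pt 3
  n : Pt 3
  la : Pt 3 →ₗ[ℝ] ℝ
  lb : Pt 3 →ₗ[ℝ] ℝ
  lg : Pt 3 →ₗ[ℝ] ℝ
  tFin : t = {v 0, v 1, v 2}
  unit : ‖n‖ = 1
  lgn : lg n = 1
  la1 : la (v 1 - v 0) = 1
  la2 : la (v 2 - v 0) = 0
  lb1 : lb (v 1 - v 0) = 0
  lb2 : lb (v 2 - v 0) = 1
  lg1 : lg (v 1 - v 0) = 0
  lg2 : lg (v 2 - v 0) = 0
  hullEq : convexHull ℝ (↑t : Set (Pt 3)) =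
    {x | 0 ≤ la (x - v 0) ∧ 0 ≤ lb (x - v 0) ∧ la (x - v 0) + lb (x - v 0) ≤ 1 ∧ lg (x - v 0) = 0}
  sub01 : convexHull ℝ ({v 0, v 1} : Set (Pt 3)) ⊆ {x | lb (x - v 0) = 0}
  sub02 : convexHull ℝ ({v 0, v 2} : Set (Pt 3)) ⊆ {x | la (x - v 0) = 0}
  sub12 : convexHull ℝ ({v 1, v 2} : Set (Pt 3)) ⊆ {x | la (x - v 0) + lb (x - v 0) = 1}
  bdA : ∀ x ∈ convexHull ℝ (↑t : Set (Pt 3)), la (x - v 0) = 0 →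
      x ∈ convexHull ℝ ({v 0, v 2} : Set (Pt 3))
  bdB : ∀ x ∈ convexHull ℝ (↑t : Set (Pt 3)), lb (x - v 0) = 0 →
      x ∈ convexHull ℝ ({v 0, v 1} : Set (Pt 3))
  bdAB : ∀ x ∈ convexHull ℝ (↑t : Set (Pt 3)), la (x - v 0) + lb (x - v 0) = 1 →
      x ∈ convexHull ℝ ({v 1, v 2} : Set (Pt 3))

namespace Frame

variable {t : Finset (Pt 3)} (f : Frame t)

def A (x : Pt 3) : ℝ := f.la (x - f.v 0)
def Bc (x : Pt 3) : ℝ := f.lb (x - f.v 0)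
def G (x : Pt 3) : ℝ := f.lg (x - f.v 0)

def p : Pt 3 := f.v 0 + (3⁻¹ : ℝ) • (f.v 1 - f.v 0) + (3⁻¹ : ℝ) • (f.v 2 - f.v 0)

def relT : Set (Pt 3) := {x | 0 < f.A x ∧ 0 < f.Bc x ∧ f.A x + f.Bc x < 1 ∧ f.G x = 0}

def O : Set (Pt 3) := {x | 0 < f.A x ∧ 0 < f.Bc x ∧ f.A x + f.Bc x < 1}

/-- The frame with the normal direction reversed. -/
def neg : Frame t :=
  { v := f.v, n := -f.n, la := f.la, lb := f.lb, lg := -f.lg,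
    tFin := f.tFin,
    unit := by simpa using f.unit,
    lgn := by simp [f.lgn],
    la1 := f.la1, la2 := f.la2, lb1 := f.lb1, lb2 := f.lb2,
    lg1 := by simp [f.lg1], lg2 := by simp [f.lg2],
    hullEq := by
      rw [f.hullEq]; ext x
      simp only [Set.mem_setOf_eq, LinearMap.neg_apply, neg_eq_zero],
    sub01 := f.sub01, sub02 := f.sub02, sub12 := f.sub12,
    bdA := f.bdA, bdB := f.bdB, bdAB := f.bdAB }

@[simp] lemma neg_A : f.neg.A = f.A := rfl
@[simp] lemma neg_Bc : f.neg.Bc = f.Bc := rfl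
@[simp] lemma neg_G (x : Pt 3) : f.neg.G x = -f.G x := by
  simp [G, neg, A]
@[simp] lemma neg_p : f.neg.p = f.p := rfl
@[simp] lemma neg_v : f.neg.v = f.v := rfl
@[simp] lemma neg_n : f.neg.n = -f.n := rfl
@[simp] lemma neg_relT : f.neg.relT = f.relT := by
  ext x; simp [relT, neg_G, neg_eq_zero]
@[simp] lemma neg_O : f.neg.O = f.O := rfl

lemma continuous_A : Continuous f.A := by
  exact (f.la.continuous_of_finiteDimensional).comp (continuous_id.sub continuous_const)
lemma continuous_Bc : Continuous f.Bc := by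
  exact (f.lb.continuous_of_finiteDimensional).comp (continuous_id.sub continuous_const)
lemma continuous_G : Continuous f.G := by
  exact (f.lg.continuous_of_finiteDimensional).comp (continuous_id.sub continuous_const)

lemma isOpen_O : IsOpen f.O := by
  have h1 : IsOpen {x | 0 < f.A x} := isOpen_lt continuous_const f.continuous_A
  have h2 : IsOpen {x | 0 < f.Bc x} := isOpen_lt continuous_const f.continuous_Bc
  have h3 : IsOpen {x | f.A x + f.Bc x < 1} :=
    isOpen_lt (f.continuous_A.add f.continuous_Bc) continuous_const
  exact h1.inter (h2.inter h3)

lemma G_shift (x : Pt 3) (s : ℝ) : f.G (x + s • f.n) = f.G x + s := by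
  have : x + s • f.n - f.v 0 = (x - f.v 0) + s • f.n := by abel
  simp [G, this, map_add, map_smul, f.lgn]

lemma lin_comb (l : Pt 3 →ₗ[ℝ] ℝ) (x y : Pt 3) (θ1 θ2 : ℝ) (h : θ1 + θ2 = 1) :
    l (θ1 • x + θ2 • y - f.v 0) = θ1 * l (x - f.v 0) + θ2 * l (y - f.v 0) := by
  have hx : θ1 • x + θ2 • y - f.v 0
      = θ1 • (x - f.v 0) + θ2 • (y - f.v 0) + (θ1 + θ2 - 1) • f.v 0 := by module
  rw [hx, h]
  simp [map_add, map_smul]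

lemma convex_relT : Convex ℝ f.relT := by
  intro x hx y hy θ1 θ2 h1 h2 h12
  obtain ⟨ha1, hb1, hab1, hg1⟩ := hx
  obtain ⟨ha2, hb2, hab2, hg2⟩ := hy
  have hA := f.lin_comb f.la x y θ1 θ2 h12
  have hB := f.lin_comb f.lb x y θ1 θ2 h12
  have hG := f.lin_comb f.lg x y θ1 θ2 h12
  simp only [relT, A, Bc, G, Set.mem_setOf_eq] at *
  rw [hA, hB, hG]
  rcases eq_or_lt_of_le h1 with h | h
  · have h2' : θ2 = 1 := by linarith
    subst h2'
    exact ⟨by nlinarith, by nlinarith, by nlinarith, by rw [hg1, hg2]; ring⟩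
  · exact ⟨by nlinarith [mul_pos h ha1, mul_nonneg h2 ha2.le],
      by nlinarith [mul_pos h hb1, mul_nonneg h2 hb2.le],
      by nlinarith [mul_lt_mul_of_pos_left hab1 h, mul_le_mul_of_nonneg_left hab2.le h2],
      by rw [hg1, hg2]; ring⟩

lemma mem_hull_iff (x : Pt 3) :
    x ∈ convexHull ℝ (↑t : Set (Pt 3)) ↔
      0 ≤ f.A x ∧ 0 ≤ f.Bc x ∧ f.A x + f.Bc x ≤ 1 ∧ f.G x = 0 := by
  rw [f.hullEq]; rfl

lemma relT_subset_hull : f.relT ⊆ convexHull ℝ (↑t : Set (Pt 3)) := by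
  intro x ⟨h1, h2, h3, h4⟩
  exact (f.mem_hull_iff x).mpr ⟨le_of_lt h1, le_of_lt h2, le_of_lt h3, h4⟩

lemma p_sub : f.p - f.v 0 = (3⁻¹ : ℝ) • (f.v 1 - f.v 0) + (3⁻¹ : ℝ) • (f.v 2 - f.v 0) := by
  simp only [p]; abel

lemma A_p : f.A f.p = 3⁻¹ := by
  simp [A, p_sub, map_add, map_smul, f.la1, f.la2]
lemma Bc_p : f.Bc f.p = 3⁻¹ := by
  simp [Bc, p_sub, map_add, map_smul, f.lb1, f.lb2]
lemma G_p : f.G f.p = 0 := by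
  simp [G, p_sub, map_add, map_smul, f.lg1, f.lg2]

lemma p_mem_relT : f.p ∈ f.relT := by
  refine ⟨by rw [A_p]; norm_num, by rw [Bc_p]; norm_num, by rw [A_p, Bc_p]; norm_num, G_p f⟩

lemma v_mem (i : Fin 3) : f.v i ∈ t := by
  have h : f.v i ∈ ({f.v 0, f.v 1, f.v 2} : Finset (Pt 3)) := by fin_cases i <;> simp
  rwa [← f.tFin] at h

end Frame

set_option maxHeartbeats 1000000 in
lemma exists_frame {t : Finset (Pt 3)} (hcard : t.card = 3)
    (hind : AffineIndependent ℝ ((↑) : t → Pt 3)) : Nonempty (Frame t) := by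
  classical
  obtain ⟨a, b, c, hab, hac, hbc, ht⟩ := Finset.card_eq_three.mp hcard
  have hvmem : ∀ i, (![a, b, c] : Fin 3 → Pt 3) i ∈ t := by
    intro i; fin_cases i <;> simp [ht]
  have hvinj : Function.Injective (![a, b, c] : Fin 3 → Pt 3) := by
    intro i j hij
    fin_cases i <;> fin_cases j <;> simp_all
  have hva : AffineIndependent ℝ (![a, b, c] : Fin 3 → Pt 3) := by
    have h := hind.comp_embedding
      ⟨fun i => (⟨![a, b, c] i, hvmem i⟩ : {x // x ∈ t}),
        fun i j hij => hvinj (congrArg Subtype.val hij)⟩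
    exact h
  have hli' := (affineIndependent_iff_linearIndependent_vsub ℝ (![a, b, c] : Fin 3 → Pt 3) 0).mp hva
  have hli2 : LinearIndependent ℝ ![b - a, c - a] := by
    have hginj : Function.Injective
        (![⟨1, by decide⟩, ⟨2, by decide⟩] : Fin 2 → {i : Fin 3 // i ≠ 0}) := by
      intro i j hij; fin_cases i <;> fin_cases j <;> simp_all
    have h := hli'.comp _ hginj
    have he : ((fun (i : {i : Fin 3 // i ≠ 0}) => (![a, b, c] : Fin 3 → Pt 3) i -ᵥ (![a, b, c] : Fin 3 → Pt 3) 0)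
        ∘ (![⟨1, by decide⟩, ⟨2, by decide⟩] : Fin 2 → {i : Fin 3 // i ≠ 0})) = ![b - a, c - a] := by
      funext i; fin_cases i <;> simp [vsub_eq_sub]
    rwa [he] at h
  have hspan_le : Submodule.span ℝ (Set.range ![b - a, c - a]) ≤
      Submodule.span ℝ (↑({b - a, c - a} : Finset (Pt 3)) : Set (Pt 3)) := by
    apply Submodule.span_mono
    rintro x ⟨i, rfl⟩
    fin_cases i <;> simp
  have hDne : Submodule.span ℝ (↑({b - a, c - a} : Finset (Pt 3)) : Set (Pt 3)) ≠ ⊤ := by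
    intro hD
    have h1 : Module.finrank ℝ (Submodule.span ℝ (↑({b - a, c - a} : Finset (Pt 3)) : Set (Pt 3))) ≤
        ({b - a, c - a} : Finset (Pt 3)).card :=
      finrank_span_finset_le_card (R := ℝ) ({b - a, c - a} : Finset (Pt 3))
    rw [hD, finrank_top] at h1
    have h2 : Module.finrank ℝ (Pt 3) = 3 := finrank_euclideanSpace_fin
    have h3 : ({b - a, c - a} : Finset (Pt 3)).card ≤ 2 := by
      apply le_trans (Finset.card_insert_le _ _); simp
    omega
  have hbot : (Submodule.span ℝ (↑({b - a, c - a} : Finset (Pt 3)) : Set (Pt 3)))ᗮ ≠ ⊥ := by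
    rw [Ne, Submodule.orthogonal_eq_bot_iff]; exact hDne
  obtain ⟨n0, hn0D, hn0⟩ := Submodule.exists_mem_ne_zero_of_ne_bot hbot
  have hnunit : ‖(‖n0‖⁻¹ • n0 : Pt 3)‖ = 1 := by
    rw [norm_smul]; simp [norm_inv]
    rw [inv_mul_cancel₀ (norm_ne_zero_iff.mpr hn0)]
  have hnD : (‖n0‖⁻¹ • n0 : Pt 3) ∈ (Submodule.span ℝ (↑({b - a, c - a} : Finset (Pt 3)) : Set (Pt 3)))ᗮ :=
    Submodule.smul_mem _ _ hn0D
  have hnns : (‖n0‖⁻¹ • n0 : Pt 3) ∉ Submodule.span ℝ (Set.range ![b - a, c - a]) := by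
    intro hmem
    have h1 := hspan_le hmem
    have h2 : (inner ℝ (‖n0‖⁻¹ • n0 : Pt 3) (‖n0‖⁻¹ • n0 : Pt 3) : ℝ) = 0 :=
      (Submodule.mem_orthogonal _ _).mp hnD _ h1
    rw [inner_self_eq_zero] at h2
    rw [h2] at hnunit; simp at hnunit
  have hli3 : LinearIndependent ℝ (![‖n0‖⁻¹ • n0, b - a, c - a] : Fin 3 → Pt 3) :=
    hli2.fin_cons hnns
  have hcard3 : Fintype.card (Fin 3) = Module.finrank ℝ (Pt 3) := by
    simp [finrank_euclideanSpace_fin]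
  set Bs : Module.Basis (Fin 3) ℝ (Pt 3) := basisOfLinearIndependentOfCardEqFinrank hli3 hcard3 with hBsdef
  have hBs : ⇑Bs = ![‖n0‖⁻¹ • n0, b - a, c - a] :=
    coe_basisOfLinearIndependentOfCardEqFinrank _ _
  have hB0 : Bs 0 = ‖n0‖⁻¹ • n0 := by rw [hBs]; rfl
  have hB1 : Bs 1 = b - a := by rw [hBs]; rfl
  have hB2 : Bs 2 = c - a := by rw [hBs]; rfl
  have key : ∀ i j : Fin 3, Bs.coord i (Bs j) = if j = i then 1 else 0 := by
    intro i j; rw [Module.Basis.coord_apply, Module.Basis.repr_self_apply]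
  have hla1 : Bs.coord 1 (b - a) = 1 := by rw [← hB1]; simpa using key 1 1
  have hla2 : Bs.coord 1 (c - a) = 0 := by rw [← hB2]; simpa using key 1 2
  have hlb1 : Bs.coord 2 (b - a) = 0 := by rw [← hB1]; simpa using key 2 1
  have hlb2 : Bs.coord 2 (c - a) = 1 := by rw [← hB2]; simpa using key 2 2
  have hlg1 : Bs.coord 0 (b - a) = 0 := by rw [← hB1]; simpa using key 0 1
  have hlg2 : Bs.coord 0 (c - a) = 0 := by rw [← hB2]; simpa using key 0 2
  have hlgn : Bs.coord 0 (‖n0‖⁻¹ • n0) = 1 := by rw [← hB0]; simpa using key 0 0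
  have hexp : ∀ x : Pt 3, x - a =
      Bs.coord 0 (x - a) • (‖n0‖⁻¹ • n0) + Bs.coord 1 (x - a) • (b - a)
        + Bs.coord 2 (x - a) • (c - a) := by
    intro x
    have h := Bs.sum_repr (x - a)
    rw [Fin.sum_univ_three, hB0, hB1, hB2] at h
    simp only [Module.Basis.coord_apply]
    exact h.symm
  have hcomb : ∀ (l : Pt 3 →ₗ[ℝ] ℝ) (x y : Pt 3) (θ1 θ2 : ℝ), θ1 + θ2 = 1 →
      l (θ1 • x + θ2 • y - a) = θ1 * l (x - a) + θ2 * l (y - a) := by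
    intro l x y θ1 θ2 h
    have hx : θ1 • x + θ2 • y - a = θ1 • (x - a) + θ2 • (y - a) + (θ1 + θ2 - 1) • a := by
      module
    rw [hx, h]
    simp [map_add, map_smul]
  have htset : (↑t : Set (Pt 3)) = {a, b, c} := by rw [ht]; simp
  have hullEq : convexHull ℝ (↑t : Set (Pt 3)) =
      {x | 0 ≤ Bs.coord 1 (x - a) ∧ 0 ≤ Bs.coord 2 (x - a) ∧
        Bs.coord 1 (x - a) + Bs.coord 2 (x - a) ≤ 1 ∧ Bs.coord 0 (x - a) = 0} := by
    apply subset_antisymm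
    · apply convexHull_min
      · rw [htset]
        rintro x (rfl | rfl | rfl)
        · refine ⟨?_, ?_, ?_, ?_⟩ <;> simp
        · refine ⟨?_, ?_, ?_, ?_⟩ <;> simp [hla1, hlb1, hlg1]
        · refine ⟨?_, ?_, ?_, ?_⟩ <;> simp [hla2, hlb2, hlg2]
      · intro x hx y hy θ1 θ2 h1 h2 h12
        obtain ⟨q1, q2, q3, q4⟩ := hx
        obtain ⟨r1, r2, r3, r4⟩ := hy
        refine ⟨?_, ?_, ?_, ?_⟩
        · rw [hcomb _ _ _ _ _ h12]; nlinarith [mul_nonneg h1 q1, mul_nonneg h2 r1]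
        · rw [hcomb _ _ _ _ _ h12]; nlinarith [mul_nonneg h1 q2, mul_nonneg h2 r2]
        · rw [hcomb _ _ _ _ _ h12, hcomb _ _ _ _ _ h12]
          nlinarith [mul_le_mul_of_nonneg_left q3 h1, mul_le_mul_of_nonneg_left r3 h2]
        · rw [hcomb _ _ _ _ _ h12, q4, r4]; ring
    · intro x hx
      obtain ⟨ha', hb', hab', hg'⟩ := hx
      have hx' : x - a = Bs.coord 1 (x - a) • (b - a) + Bs.coord 2 (x - a) • (c - a) := by
        have h := hexp x; rw [hg'] at h; simpa using h
      have hxeq : x = a + (Bs.coord 1 (x - a) • (b - a) + Bs.coord 2 (x - a) • (c - a)) :=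
        sub_eq_iff_eq_add'.mp hx' 
      have hsum : ∑ i ∈ Finset.univ,
          (![1 - Bs.coord 1 (x - a) - Bs.coord 2 (x - a), Bs.coord 1 (x - a), Bs.coord 2 (x - a)]
            : Fin 3 → ℝ) i = 1 := by
        rw [Fin.sum_univ_three]
        simp only [Matrix.cons_val_zero, Matrix.cons_val_one, Matrix.head_cons,
          Matrix.cons_val_two, Matrix.tail_cons]
        ring
      have hmem := Finset.centerMass_mem_convexHull (Finset.univ : Finset (Fin 3))
        (w := ![1 - Bs.coord 1 (x - a) - Bs.coord 2 (x - a), Bs.coord 1 (x - a), Bs.coord 2 (x - a)])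
        (s := (↑t : Set (Pt 3)))
        (fun i _ => by
          match i with
          | 0 => simp only [Matrix.cons_val_zero]; linarith
          | 1 => simp only [Matrix.cons_val_one, Matrix.head_cons, Matrix.cons_val_zero]; linarith
          | 2 => simp only [Matrix.cons_val_two, Matrix.tail_cons, Matrix.head_cons]; linarith)
        (by rw [hsum]; norm_num)
        (z := ![a, b, c]) (fun i _ => by fin_cases i <;> simp [htset])
      rw [Finset.centerMass_eq_of_sum_1 _ _ hsum, Fin.sum_univ_three] at hmem
      simp only [Matrix.cons_val_zero, Matrix.cons_val_one, Matrix.head_cons,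
        Matrix.cons_val_two, Matrix.tail_cons] at hmem
      have hfin : (1 - Bs.coord 1 (x - a) - Bs.coord 2 (x - a)) • a
          + Bs.coord 1 (x - a) • b + Bs.coord 2 (x - a) • c = x := by
        have hmod : (1 - Bs.coord 1 (x - a) - Bs.coord 2 (x - a)) • a
            + Bs.coord 1 (x - a) • b + Bs.coord 2 (x - a) • c
            = a + (Bs.coord 1 (x - a) • (b - a) + Bs.coord 2 (x - a) • (c - a)) := by module
        rw [hmod]; exact hxeq.symm
      rwa [hfin] at hmem
  have hsub : ∀ (l : Pt 3 →ₗ[ℝ] ℝ) (x y : Pt 3) (r : ℝ), l (x - a) = r → l (y - a) = r →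
      convexHull ℝ ({x, y} : Set (Pt 3)) ⊆ {z | l (z - a) = r} := by
    intro l x y r hx hy
    apply convexHull_min
    · rintro z (rfl | rfl)
      · exact hx
      · exact hy
    · intro z1 h1 z2 h2 θ1 θ2 t1 t2 t12
      rw [Set.mem_setOf_eq, hcomb l _ _ _ _ t12, h1, h2]
      linear_combination r * t12
  refine ⟨⟨![a, b, c], ‖n0‖⁻¹ • n0, Bs.coord 1, Bs.coord 2, Bs.coord 0, ?_, hnunit, hlgn,
      hla1, hla2, hlb1, hlb2, hlg1, hlg2, hullEq, ?_, ?_, ?_, ?_, ?_, ?_⟩⟩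
  · simpa using ht
  · -- sub01
    intro z hz
    have h := hsub (Bs.coord 2) a b 0 (by simp) (by simpa using hlb1) hz
    exact h
  · -- sub02
    intro z hz
    exact hsub (Bs.coord 1) a c 0 (by simp) (by simpa using hla2) hz
  · -- sub12
    intro z hz
    have h := hsub (Bs.coord 1 + Bs.coord 2) b c 1
      (by simp [hla1, hlb1]) (by simp [hla2, hlb2]) hz
    simpa using h
  · -- bdA
    intro x hx h0
    simp only [Matrix.cons_val_zero, Matrix.cons_val_one, Matrix.head_cons,
      Matrix.cons_val_two, Matrix.tail_cons] at h0 ⊢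
    rw [hullEq] at hx
    obtain ⟨ha', hb', hab', hg'⟩ := hx
    have hx' : x = a + Bs.coord 2 (x - a) • (c - a) := by
      have h := hexp x
      rw [hg', h0] at h
      simp only [zero_smul, zero_add, add_zero] at h
      exact sub_eq_iff_eq_add'.mp h
    rw [convexHull_pair, segment_eq_image']
    refine ⟨Bs.coord 2 (x - a), ⟨hb', by linarith⟩, hx'.symm⟩
  · -- bdB
    intro x hx h0
    simp only [Matrix.cons_val_zero, Matrix.cons_val_one, Matrix.head_cons,
      Matrix.cons_val_two, Matrix.tail_cons] at h0 ⊢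
    rw [hullEq] at hx
    obtain ⟨ha', hb', hab', hg'⟩ := hx
    have hx' : x = a + Bs.coord 1 (x - a) • (b - a) := by
      have h := hexp x
      rw [hg', h0] at h
      simp only [zero_smul, zero_add, add_zero] at h
      exact sub_eq_iff_eq_add'.mp h
    rw [convexHull_pair, segment_eq_image']
    refine ⟨Bs.coord 1 (x - a), ⟨ha', by linarith⟩, hx'.symm⟩
  · -- bdAB
    intro x hx h0
    simp only [Matrix.cons_val_zero, Matrix.cons_val_one, Matrix.head_cons,
      Matrix.cons_val_two, Matrix.tail_cons] at h0 ⊢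
    rw [hullEq] at hx
    obtain ⟨ha', hb', hab', hg'⟩ := hx
    have hx' : x = b + Bs.coord 2 (x - a) • (c - b) := by
      have h := hexp x
      rw [hg'] at h
      simp only [zero_smul, zero_add] at h
      have h2 : x = a + (Bs.coord 1 (x - a) • (b - a) + Bs.coord 2 (x - a) • (c - a)) :=
        sub_eq_iff_eq_add'.mp h
      have hla : Bs.coord 1 (x - a) = 1 - Bs.coord 2 (x - a) := by linarith
      calc x = a + (Bs.coord 1 (x - a) • (b - a) + Bs.coord 2 (x - a) • (c - a)) := h2
        _ = b + Bs.coord 2 (x - a) • (c - b) := by rw [hla]; module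
    rw [convexHull_pair, segment_eq_image']
    refine ⟨Bs.coord 2 (x - a), ⟨hb', by linarith⟩, hx'.symm⟩


lemma connectedComponentIn_eq_of_clopen {X : Type*} [TopologicalSpace X] {s A : Set X}
    (hAs : A ⊆ s) (hA : IsOpen A) (hsA : IsOpen (s \ A)) (hconn : IsPreconnected A)
    {x : X} (hx : x ∈ A) : connectedComponentIn s x = A := by
  refine subset_antisymm (fun y hy => ?_) (hconn.subset_connectedComponentIn hx hAs)
  by_contra hyA
  have hK : IsPreconnected (connectedComponentIn s x) := isPreconnected_connectedComponentIn
  have hsub : connectedComponentIn s x ⊆ A ∪ (s \ A) := fun z hz => by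
    by_cases h : z ∈ A
    · exact Or.inl h
    · exact Or.inr ⟨connectedComponentIn_subset s x hz, h⟩
  have h1 : (connectedComponentIn s x ∩ A).Nonempty :=
    ⟨x, mem_connectedComponentIn (hAs hx), hx⟩
  have h2 : (connectedComponentIn s x ∩ (s \ A)).Nonempty :=
    ⟨y, hy, connectedComponentIn_subset s x hy, hyA⟩
  obtain ⟨z, -, hzA, -, hz⟩ := hK A (s \ A) hA hsA hsub h1 h2
  exact hz hzA

open TriangularConfiguration

lemma space_closed (E : TriangularConfiguration 3) : IsClosed E.space := by
  apply Set.Finite.isClosed_biUnion (E.faces.finite_toSet)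
  intro s _
  exact ((s.finite_toSet).isCompact_convexHull ℝ).isClosed

lemma space_compl_open (E : TriangularConfiguration 3) : IsOpen E.spaceᶜ :=
  (space_closed E).isOpen_compl

lemma space_mono {E Δ : TriangularConfiguration 3} (h : E.faces ⊆ Δ.faces) :
    E.space ⊆ Δ.space := by
  intro x hx
  simp only [space, Set.mem_iUnion] at hx ⊢
  obtain ⟨s, hs, hxs⟩ := hx
  exact ⟨s, h hs, hxs⟩

/-- The union of the convex hulls of the faces of `Δ` other than `t`. -/
def Fs (Δ : TriangularConfiguration 3) (t : Finset (Pt 3)) : Set (Pt 3) :=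
  ⋃ s ∈ Δ.faces.erase t, convexHull ℝ (↑s : Set (Pt 3))

lemma Fs_closed (Δ : TriangularConfiguration 3) (t : Finset (Pt 3)) : IsClosed (Fs Δ t) := by
  apply Set.Finite.isClosed_biUnion ((Δ.faces.erase t).finite_toSet)
  intro s _
  exact ((s.finite_toSet).isCompact_convexHull ℝ).isClosed

lemma Fs_mono {E Δ : TriangularConfiguration 3} (h : E.faces ⊆ Δ.faces) (t : Finset (Pt 3)) :
    Fs E t ⊆ Fs Δ t := by
  intro x hx
  simp only [Fs, Set.mem_iUnion] at hx ⊢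
  obtain ⟨s, hs, hxs⟩ := hx
  exact ⟨s, Finset.mem_erase.mpr ⟨(Finset.mem_erase.mp hs).1, h (Finset.mem_erase.mp hs).2⟩, hxs⟩

lemma Fs_subset_space (Δ : TriangularConfiguration 3) (t : Finset (Pt 3)) :
    Fs Δ t ⊆ Δ.space := by
  intro x hx
  simp only [Fs, Set.mem_iUnion] at hx
  obtain ⟨s, hs, hxs⟩ := hx
  simp only [space, Set.mem_iUnion]
  exact ⟨s, (Finset.mem_erase.mp hs).2, hxs⟩

lemma space_eq {Δ : TriangularConfiguration 3} {t : Finset (Pt 3)} (htf : t ∈ Δ.faces) :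
    Δ.space = convexHull ℝ (↑t : Set (Pt 3)) ∪ Fs Δ t := by
  have h : Δ.faces = insert t (Δ.faces.erase t) := (Finset.insert_erase htf).symm
  show (⋃ s ∈ Δ.faces, convexHull ℝ (↑s : Set (Pt 3))) = _
  rw [h, Finset.set_biUnion_insert]
  rfl

lemma hull_subset_space {E : TriangularConfiguration 3} {t : Finset (Pt 3)} (htf : t ∈ E.faces) :
    convexHull ℝ (↑t : Set (Pt 3)) ⊆ E.space := by
  intro x hx
  simp only [space, Set.mem_iUnion]
  exact ⟨t, htf, hx⟩

lemma erase_space {E : TriangularConfiguration 3} {t : Finset (Pt 3)} (ht3 : t ∈ E.triangles) :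
    (E.eraseTriangle t ht3).space = Fs E t := rfl

lemma pair_card_le (x y : Pt 3) : ({x, y} : Finset (Pt 3)).card ≤ 2 := by
  apply le_trans (Finset.card_insert_le _ _); simp

lemma pair_face {E : TriangularConfiguration 3} {t : Finset (Pt 3)} (htE : t ∈ E.faces)
    (hcard : t.card = 3) (x y : Pt 3) (hxy : ({x, y} : Finset (Pt 3)) ⊆ t) :
    ({x, y} : Finset (Pt 3)) ∈ E.faces.erase t := by
  refine Finset.mem_erase.mpr ⟨?_, E.down_closed t htE _ hxy (Finset.insert_ne_empty _ _)⟩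
  intro h
  have h2 := pair_card_le x y
  rw [h] at h2; omega

lemma relT_inter_F (Δ : TriangularConfiguration 3) {t : Finset (Pt 3)} (htf : t ∈ Δ.faces)
    (hcard : t.card = 3) (fr : Frame t) : fr.relT ∩ Fs Δ t = ∅ := by
  ext x
  simp only [Set.mem_inter_iff, Set.mem_empty_iff_false, iff_false, not_and]
  intro hx hF
  simp only [Fs, Set.mem_iUnion] at hF
  obtain ⟨s, hs, hxs⟩ := hF
  have hsne : s ≠ t := (Finset.mem_erase.mp hs).1
  have hsf : s ∈ Δ.faces := (Finset.mem_erase.mp hs).2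
  have hxt : x ∈ convexHull ℝ (↑t : Set (Pt 3)) := fr.relT_subset_hull hx
  have hmem := Δ.inter_subset_convexHull s hsf t htf ⟨hxs, hxt⟩
  have hssub : s ∩ t ⊆ t := Finset.inter_subset_right
  have hne : s ∩ t ≠ t := by
    intro h
    have hts : t ⊆ s := fun u hu => by
      have h2 : u ∈ s ∩ t := by rw [h]; exact hu
      exact (Finset.mem_inter.mp h2).1
    have h3 := Finset.eq_of_subset_of_card_le hts (le_trans (Δ.card_le s hsf) (le_of_eq hcard.symm))
    exact hsne h3.symm
  obtain ⟨x0, hx0t, hx0n⟩ := Finset.exists_of_ssubset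
    (ssubset_of_subset_of_ne hssub hne)
  rw [fr.tFin] at hx0t
  simp only [Finset.mem_insert, Finset.mem_singleton] at hx0t
  obtain ⟨hA, hB, hAB, hG⟩ := hx
  have hcase : ∀ i : Fin 3, x0 = fr.v i →
      ∀ u ∈ s ∩ t, u = fr.v 0 ∨ u = fr.v 1 ∨ u = fr.v 2 := by
    intro i hi u hu
    have h1 : u ∈ t := (Finset.mem_inter.mp hu).2
    rw [fr.tFin] at h1
    simpa using h1
  rcases hx0t with h0 | h0 | h0
  · have hsub2 : (↑(s ∩ t) : Set (Pt 3)) ⊆ ({fr.v 1, fr.v 2} : Set (Pt 3)) := by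
      intro u hu
      have hut : u ∈ s ∩ t := hu
      rcases hcase 0 h0 u hut with h | h | h
      · exact absurd hut (by rw [h0] at hx0n; rw [← h] at hx0n; exact hx0n)
      · simp [h]
      · simp [h]
    have h2 := fr.sub12 (convexHull_mono hsub2 hmem)
    simp only [Set.mem_setOf_eq] at h2
    have h3 : fr.A x + fr.Bc x = 1 := h2
    linarith
  · have hsub2 : (↑(s ∩ t) : Set (Pt 3)) ⊆ ({fr.v 0, fr.v 2} : Set (Pt 3)) := by
      intro u hu
      have hut : u ∈ s ∩ t := hu
      rcases hcase 1 h0 u hut with h | h | h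
      · simp [h]
      · exact absurd hut (by rw [h0] at hx0n; rw [← h] at hx0n; exact hx0n)
      · simp [h]
    have h2 := fr.sub02 (convexHull_mono hsub2 hmem)
    simp only [Set.mem_setOf_eq] at h2
    have h3 : fr.A x = 0 := h2
    linarith
  · have hsub2 : (↑(s ∩ t) : Set (Pt 3)) ⊆ ({fr.v 0, fr.v 1} : Set (Pt 3)) := by
      intro u hu
      have hut : u ∈ s ∩ t := hu
      rcases hcase 2 h0 u hut with h | h | h
      · simp [h]
      · simp [h]
      · exact absurd hut (by rw [h0] at hx0n; rw [← h] at hx0n; exact hx0n)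
    have h2 := fr.sub01 (convexHull_mono hsub2 hmem)
    simp only [Set.mem_setOf_eq] at h2
    have h3 : fr.Bc x = 0 := h2
    linarith

lemma hull_diff_F {Δ E : TriangularConfiguration 3} {t : Finset (Pt 3)}
    (htf : t ∈ Δ.faces) (hcard : t.card = 3) (fr : Frame t)
    (htE : t ∈ E.faces) (hEsub : E.faces ⊆ Δ.faces) :
    convexHull ℝ (↑t : Set (Pt 3)) \ Fs E t = fr.relT := by
  apply subset_antisymm
  · rintro x ⟨hx, hxF⟩
    obtain ⟨hA, hB, hAB, hG⟩ := (fr.mem_hull_iff x).mp hx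
    have hpair : ∀ i j : Fin 3, ({fr.v i, fr.v j} : Finset (Pt 3)) ⊆ t := by
      intro i j u hu
      simp only [Finset.mem_insert, Finset.mem_singleton] at hu
      rw [fr.tFin]
      rcases hu with h | h <;> rw [h] <;> fin_cases i <;> fin_cases j <;> simp
    have hmem : ∀ i j : Fin 3, x ∈ convexHull ℝ ({fr.v i, fr.v j} : Set (Pt 3)) → x ∈ Fs E t := by
      intro i j hm
      have hface := pair_face htE hcard (fr.v i) (fr.v j) (hpair i j)
      apply Set.subset_biUnion_of_mem hface
      simpa using hm
    have hA' : 0 < fr.A x := by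
      rcases lt_or_eq_of_le hA with h | h
      · exact h
      · exact absurd (hmem 0 2 (fr.bdA x hx h.symm)) hxF
    have hB' : 0 < fr.Bc x := by
      rcases lt_or_eq_of_le hB with h | h
      · exact h
      · exact absurd (hmem 0 1 (fr.bdB x hx h.symm)) hxF
    have hAB' : fr.A x + fr.Bc x < 1 := by
      rcases lt_or_eq_of_le hAB with h | h
      · exact h
      · exact absurd (hmem 1 2 (fr.bdAB x hx h)) hxF
    exact ⟨hA', hB', hAB', hG⟩
  · intro x hx
    refine ⟨fr.relT_subset_hull hx, fun hF => ?_⟩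
    have h := relT_inter_F Δ htf hcard fr
    have : x ∈ fr.relT ∩ Fs Δ t := ⟨hx, Fs_mono hEsub t hF⟩
    rw [h] at this
    exact this


lemma Frame.lin_line {t : Finset (Pt 3)} (f : Frame t) (l : Pt 3 →ₗ[ℝ] ℝ) (x y : Pt 3) (θ : ℝ) :
    l (x + θ • (y - x) - f.v 0) = l (x - f.v 0) + θ * (l (y - f.v 0) - l (x - f.v 0)) := by
  have h : x + θ • (y - x) - f.v 0 = (x - f.v 0) + θ • ((y - f.v 0) - (x - f.v 0)) := by module
  rw [h]
  simp only [map_add, map_smul, map_sub, smul_eq_mul]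

/-- The open wedge over the open triangle on the positive side of the frame. -/
def W (Δ : TriangularConfiguration 3) (t : Finset (Pt 3)) (fr : Frame t) : Set (Pt 3) :=
  {x | ∃ q s : _, q ∈ fr.relT ∧ 0 < s ∧ s < infDist q (Fs Δ t) ∧ x = q + s • fr.n}

/-- The reference point on the positive side of the triangle. -/
def Pp (Δ : TriangularConfiguration 3) (t : Finset (Pt 3)) (fr : Frame t) : Pt 3 :=
  fr.p + (infDist fr.p (Fs Δ t) / 2) • fr.n

variable {Δ E : TriangularConfiguration 3} {t : Finset (Pt 3)}

lemma Fs_nonempty (htf : t ∈ Δ.faces) (hcard : t.card = 3) (fr : Frame t) :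
    (Fs Δ t).Nonempty := by
  have hsub : ({fr.v 0} : Finset (Pt 3)) ⊆ t := by
    intro u hu; simp only [Finset.mem_singleton] at hu; rw [hu]; exact fr.v_mem 0
  have h0 : ({fr.v 0} : Finset (Pt 3)) ∈ Δ.faces.erase t := by
    refine Finset.mem_erase.mpr ⟨?_, Δ.down_closed t htf _ hsub (by simp)⟩
    intro h; rw [← h] at hcard; simp at hcard
  refine ⟨fr.v 0, Set.mem_biUnion h0 ?_⟩
  exact subset_convexHull ℝ _ (by simp)

lemma dd_pos (htf : t ∈ Δ.faces) (hcard : t.card = 3) (fr : Frame t) {q : Pt 3}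
    (hq : q ∈ fr.relT) : 0 < infDist q (Fs Δ t) := by
  rw [← (Fs_closed Δ t).notMem_iff_infDist_pos (Fs_nonempty htf hcard fr)]
  intro h
  have h2 := relT_inter_F Δ htf hcard fr
  have h3 : q ∈ fr.relT ∩ Fs Δ t := ⟨hq, h⟩
  rw [h2] at h3
  exact h3

lemma dist_shift (q : Pt 3) (s : ℝ) (fr : Frame t) (hs : 0 ≤ s) :
    dist (q + s • fr.n) q = s := by
  rw [dist_self_add_left, norm_smul, fr.unit, Real.norm_eq_abs, abs_of_nonneg hs, mul_one]

lemma W_subset_compl (htf : t ∈ Δ.faces) (hcard : t.card = 3) (fr : Frame t) :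
    W Δ t fr ⊆ Δ.spaceᶜ := by
  rintro x ⟨q, s, hq, hs0, hsd, rfl⟩
  simp only [Set.mem_compl_iff]
  rw [space_eq htf]
  rintro (hx | hx)
  · have hG := ((fr.mem_hull_iff _).mp hx).2.2.2
    rw [fr.G_shift, hq.2.2.2] at hG
    linarith
  · have h1 : infDist q (Fs Δ t) ≤ infDist (q + s • fr.n) (Fs Δ t) + dist q (q + s • fr.n) :=
      infDist_le_infDist_add_dist
    rw [dist_comm, dist_shift q s fr hs0.le] at h1
    have h2 : infDist (q + s • fr.n) (Fs Δ t) = 0 := infDist_zero_of_mem hx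
    linarith

lemma Pp_mem_W (htf : t ∈ Δ.faces) (hcard : t.card = 3) (fr : Frame t) :
    Pp Δ t fr ∈ W Δ t fr :=
  ⟨fr.p, _, fr.p_mem_relT, half_pos (dd_pos htf hcard fr fr.p_mem_relT),
    half_lt_self (dd_pos htf hcard fr fr.p_mem_relT), rfl⟩

set_option maxHeartbeats 1000000 in
lemma W_subset_component (htf : t ∈ Δ.faces) (hcard : t.card = 3) (fr : Frame t) :
    W Δ t fr ⊆ connectedComponentIn Δ.spaceᶜ (Pp Δ t fr) := by
  rintro x ⟨q, s, hq, hs0, hsd, rfl⟩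
  have hseg : segment ℝ q fr.p ⊆ fr.relT :=
    (fr.convex_relT).segment_subset hq fr.p_mem_relT
  have hcpt : IsCompact (segment ℝ q fr.p) := by
    rw [← convexHull_pair]
    exact (Set.finite_singleton _ |>.insert _).isCompact_convexHull ℝ
  obtain ⟨z, hzseg, hzmin⟩ := hcpt.exists_isMinOn ⟨q, left_mem_segment ℝ q fr.p⟩
    ((continuous_infDist_pt (Fs Δ t)).continuousOn)
  have hm : 0 < infDist z (Fs Δ t) := dd_pos htf hcard fr (hseg hzseg)
  have hmq : infDist z (Fs Δ t) ≤ infDist q (Fs Δ t) := hzmin (left_mem_segment ℝ q fr.p)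
  have hmp : infDist z (Fs Δ t) ≤ infDist fr.p (Fs Δ t) := hzmin (right_mem_segment ℝ q fr.p)
  set m := infDist z (Fs Δ t) with hmdef
  set h0 : ℝ := min s m / 2 with hh0
  have hh0pos : 0 < h0 := div_pos (lt_min hs0 hm) two_pos
  have hh0s : h0 ≤ s / 2 := by
    have := min_le_left s m; rw [hh0]; linarith
  have hh0m : h0 ≤ m / 2 := by
    have := min_le_right s m; rw [hh0]; linarith
  set dp := infDist fr.p (Fs Δ t) with hdp
  have hdppos : 0 < dp := dd_pos htf hcard fr fr.p_mem_relT
  have hseg1 : segment ℝ (q + s • fr.n) (q + h0 • fr.n) ⊆ W Δ t fr := by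
    intro w hw
    rw [segment_eq_image'] at hw
    obtain ⟨θ, hθ, rfl⟩ := hw
    refine ⟨q, s + θ * (h0 - s), hq, ?_, ?_, ?_⟩
    · nlinarith [mul_nonneg (sub_nonneg.mpr hθ.2) (show (0:ℝ) ≤ s - h0 by linarith)]
    · nlinarith [mul_nonneg hθ.1 (show (0:ℝ) ≤ s - h0 by linarith)]
    · module
  have hseg2 : segment ℝ (q + h0 • fr.n) (fr.p + h0 • fr.n) ⊆ W Δ t fr := by
    intro w hw
    rw [segment_eq_image'] at hw
    obtain ⟨θ, hθ, rfl⟩ := hw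
    have hq' : q + θ • (fr.p - q) ∈ segment ℝ q fr.p := by
      rw [segment_eq_image']; exact ⟨θ, hθ, rfl⟩
    refine ⟨q + θ • (fr.p - q), h0, hseg hq', hh0pos, ?_, ?_⟩
    · have h5 : m ≤ infDist (q + θ • (fr.p - q)) (Fs Δ t) := hzmin hq'
      linarith
    · module
  have hseg3 : segment ℝ (fr.p + h0 • fr.n) (Pp Δ t fr) ⊆ W Δ t fr := by
    intro w hw
    rw [segment_eq_image'] at hw
    obtain ⟨θ, hθ, rfl⟩ := hw
    have hmn : 0 < min h0 (dp / 2) := lt_min hh0pos (by positivity)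
    refine ⟨fr.p, h0 + θ * (dp / 2 - h0), fr.p_mem_relT, ?_, ?_, ?_⟩
    · nlinarith [mul_le_mul_of_nonneg_left (min_le_left h0 (dp / 2)) (sub_nonneg.mpr hθ.2),
        mul_le_mul_of_nonneg_left (min_le_right h0 (dp / 2)) hθ.1]
    · nlinarith [mul_le_mul_of_nonneg_left (show h0 ≤ dp / 2 by linarith) (sub_nonneg.mpr hθ.2)]
    · show fr.p + h0 • fr.n + θ • (Pp Δ t fr - (fr.p + h0 • fr.n))
        = fr.p + (h0 + θ * (dp / 2 - h0)) • fr.n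
      simp only [Pp]
      rw [← hdp]
      module
  have hLW : segment ℝ (q + s • fr.n) (q + h0 • fr.n) ∪ segment ℝ (q + h0 • fr.n) (fr.p + h0 • fr.n)
      ∪ segment ℝ (fr.p + h0 • fr.n) (Pp Δ t fr) ⊆ W Δ t fr := by
    rintro w ((hw | hw) | hw)
    exacts [hseg1 hw, hseg2 hw, hseg3 hw]
  have hLpre : IsPreconnected (segment ℝ (q + s • fr.n) (q + h0 • fr.n)
      ∪ segment ℝ (q + h0 • fr.n) (fr.p + h0 • fr.n)
      ∪ segment ℝ (fr.p + h0 • fr.n) (Pp Δ t fr)) := by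
    apply IsPreconnected.union (fr.p + h0 • fr.n)
    · exact Or.inr (right_mem_segment ℝ _ _)
    · exact left_mem_segment ℝ _ _
    · apply IsPreconnected.union (q + h0 • fr.n)
      · exact right_mem_segment ℝ _ _
      · exact left_mem_segment ℝ _ _
      · exact (convex_segment _ _).isPreconnected
      · exact (convex_segment _ _).isPreconnected
    · exact (convex_segment _ _).isPreconnected
  have hLsub := subset_trans hLW (W_subset_compl htf hcard fr)
  have hres := hLpre.subset_connectedComponentIn
    (Or.inr (right_mem_segment ℝ (fr.p + h0 • fr.n) (Pp Δ t fr))) hLsub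
  exact hres (Or.inl (Or.inl (left_mem_segment ℝ _ _)))



lemma compl_mono_conf (hEsub : E.faces ⊆ Δ.faces) : Δ.spaceᶜ ⊆ E.spaceᶜ :=
  Set.compl_subset_compl.mpr (space_mono hEsub)

lemma relT_subset_closure (htf : t ∈ Δ.faces) (hcard : t.card = 3) (fr : Frame t)
    (htE : t ∈ E.faces) (hEsub : E.faces ⊆ Δ.faces) :
    fr.relT ⊆ closure (connectedComponentIn E.spaceᶜ (Pp Δ t fr)) := by
  intro q hq
  rw [Metric.mem_closure_iff]
  intro ε hε
  have hd := dd_pos htf hcard fr hq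
  set s0 := min (ε / 2) (infDist q (Fs Δ t) / 2) with hs0def
  have hs0 : 0 < s0 := lt_min (by linarith) (by linarith)
  refine ⟨q + s0 • fr.n, ?_, ?_⟩
  · apply connectedComponentIn_mono _ (compl_mono_conf hEsub)
    apply W_subset_component htf hcard fr
    exact ⟨q, s0, hq, hs0, lt_of_le_of_lt (min_le_right _ _) (by linarith), rfl⟩
  · rw [dist_comm, dist_shift q s0 fr hs0.le]
    calc s0 ≤ ε / 2 := min_le_left _ _
    _ < ε := by linarith

lemma hull_subset_closure_relT (fr : Frame t) :
    convexHull ℝ (↑t : Set (Pt 3)) ⊆ closure fr.relT := by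
  intro x hx
  obtain ⟨hA, hB, hAB, hG⟩ := (fr.mem_hull_iff x).mp hx
  rw [Metric.mem_closure_iff]
  intro ε hε
  set D := dist x fr.p with hD
  set θ := min 1 (ε / (D + 1)) with hθdef
  have hDpos : 0 ≤ D := dist_nonneg
  have hθpos : 0 < θ := lt_min one_pos (by positivity)
  have hθ1 : θ ≤ 1 := min_le_left _ _
  have hθε : θ * (D + 1) ≤ ε := by
    calc θ * (D + 1) ≤ (ε / (D + 1)) * (D + 1) := by
          apply mul_le_mul_of_nonneg_right (min_le_right _ _); linarith
    _ = ε := by field_simp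
  refine ⟨x + θ • (fr.p - x), ?_, ?_⟩
  · have hA' : fr.A (x + θ • (fr.p - x)) = fr.A x + θ * (fr.A fr.p - fr.A x) :=
      fr.lin_line fr.la x fr.p θ
    have hB' : fr.Bc (x + θ • (fr.p - x)) = fr.Bc x + θ * (fr.Bc fr.p - fr.Bc x) :=
      fr.lin_line fr.lb x fr.p θ
    have hG' : fr.G (x + θ • (fr.p - x)) = fr.G x + θ * (fr.G fr.p - fr.G x) :=
      fr.lin_line fr.lg x fr.p θ
    rw [fr.A_p] at hA'
    rw [fr.Bc_p] at hB'
    rw [fr.G_p] at hG'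
    refine ⟨?_, ?_, ?_, ?_⟩
    · rw [hA']; nlinarith [mul_nonneg (sub_nonneg.mpr hθ1) hA]
    · rw [hB']; nlinarith [mul_nonneg (sub_nonneg.mpr hθ1) hB]
    · rw [hA', hB']; nlinarith [mul_le_mul_of_nonneg_left hAB (sub_nonneg.mpr hθ1)]
    · rw [hG', hG]; ring
  · rw [dist_self_add_right, norm_smul, Real.norm_eq_abs, abs_of_pos hθpos]
    have h5 : ‖fr.p - x‖ = D := by rw [hD, dist_comm, dist_eq_norm]
    rw [h5]
    nlinarith

lemma hull_subset_closure (htf : t ∈ Δ.faces) (hcard : t.card = 3) (fr : Frame t)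
    (htE : t ∈ E.faces) (hEsub : E.faces ⊆ Δ.faces) :
    convexHull ℝ (↑t : Set (Pt 3)) ⊆
      closure (connectedComponentIn E.spaceᶜ (Pp Δ t fr)) := by
  refine subset_trans (hull_subset_closure_relT fr) ?_
  have h := closure_mono (relT_subset_closure htf hcard fr htE hEsub)
  rwa [closure_closure] at h

lemma local_ball (htf : t ∈ Δ.faces) (hcard : t.card = 3) (fr : Frame t) {q : Pt 3}
    (hq : q ∈ fr.relT) :
    ∃ ε, 0 < ε ∧ ε ≤ infDist q (Fs Δ t) ∧ ball q ε ⊆ fr.O := by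
  obtain ⟨ε1, hε1, hball⟩ := Metric.isOpen_iff.mp fr.isOpen_O q ⟨hq.1, hq.2.1, hq.2.2.1⟩
  exact ⟨min ε1 (infDist q (Fs Δ t)), lt_min hε1 (dd_pos htf hcard fr hq), min_le_right _ _,
    subset_trans (ball_subset_ball (min_le_left _ _)) hball⟩

lemma ball_inter_F {q : Pt 3} {ε : ℝ} (h1 : ε ≤ infDist q (Fs Δ t)) :
    ball q ε ∩ Fs Δ t = ∅ := by
  ext x
  simp only [Set.mem_inter_iff, Set.mem_empty_iff_false, iff_false, not_and]
  intro hb hF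
  have h2 := infDist_le_dist_of_mem (x := q) hF
  rw [mem_ball, dist_comm] at hb
  linarith

lemma convex_halfspace_G_pos (fr : Frame t) : Convex ℝ {x : Pt 3 | 0 < fr.G x} := by
  have h : {x : Pt 3 | 0 < fr.G x} = {x : Pt 3 | fr.lg (fr.v 0) < fr.lg x} := by
    ext x; simp [Frame.G, map_sub, sub_pos]
  rw [h]
  exact convex_halfSpace_gt ⟨fun a b => map_add _ a b, fun c a => map_smul _ c a⟩ _

lemma halfball_subset (htf : t ∈ Δ.faces) (hcard : t.card = 3) (fr : Frame t)
    (htE : t ∈ E.faces) (hEsub : E.faces ⊆ Δ.faces)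
    {q : Pt 3} {ε : ℝ} (hq : q ∈ fr.relT) (hε : 0 < ε) (h1 : ε ≤ infDist q (Fs Δ t)) :
    ball q ε ∩ {x | 0 < fr.G x} ⊆ connectedComponentIn E.spaceᶜ (Pp Δ t fr) := by
  have hW : q + (ε / 2) • fr.n ∈ W Δ t fr :=
    ⟨q, ε / 2, hq, half_pos hε, lt_of_lt_of_le (half_lt_self hε) h1, rfl⟩
  have hwmem : q + (ε / 2) • fr.n ∈ ball q ε ∩ {x | 0 < fr.G x} := by
    refine ⟨?_, ?_⟩
    · rw [mem_ball, dist_shift q (ε / 2) fr (by linarith)]; linarith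
    · show 0 < fr.G (q + (ε / 2) • fr.n)
      rw [fr.G_shift, hq.2.2.2]; linarith
  have hconv : Convex ℝ (ball q ε ∩ {x | 0 < fr.G x}) :=
    (convex_ball q ε).inter (convex_halfspace_G_pos fr)
  have hsub2 : ball q ε ∩ {x | 0 < fr.G x} ⊆ E.spaceᶜ := by
    rintro x ⟨hxb, hxg⟩
    simp only [Set.mem_compl_iff]
    rw [space_eq htE]
    rintro (hx | hx)
    · have h2 := ((fr.mem_hull_iff x).mp hx).2.2.2
      simp only [Set.mem_setOf_eq] at hxg
      linarith
    · have hxF : x ∈ Fs Δ t := Fs_mono hEsub t hx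
      have h3 := infDist_le_dist_of_mem (x := q) hxF
      rw [mem_ball, dist_comm] at hxb
      linarith
  have hXeq := connectedComponentIn_eq
    (connectedComponentIn_mono _ (compl_mono_conf hEsub) (W_subset_component htf hcard fr hW))
  rw [hXeq]
  exact (hconv.isPreconnected).subset_connectedComponentIn hwmem hsub2


lemma cell_open {E : TriangularConfiguration 3} {Z : Set (Pt 3)} (hZ : E.IsCell Z) :
    IsOpen Z := by
  obtain ⟨z, hz, rfl⟩ := hZ
  exact (space_compl_open E).connectedComponentIn

lemma cell_subset {E : TriangularConfiguration 3} {Z : Set (Pt 3)} (hZ : E.IsCell Z) :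
    Z ⊆ E.spaceᶜ := by
  obtain ⟨z, hz, rfl⟩ := hZ
  exact connectedComponentIn_subset _ _

lemma cell_eq_componentIn {E : TriangularConfiguration 3} {Z : Set (Pt 3)} (hZ : E.IsCell Z)
    {z : Pt 3} (hzZ : z ∈ Z) : Z = connectedComponentIn E.spaceᶜ z := by
  obtain ⟨z0, hz0, rfl⟩ := hZ
  exact connectedComponentIn_eq hzZ

lemma cell_eq_of_mem {E : TriangularConfiguration 3} {Z1 Z2 : Set (Pt 3)} (h1 : E.IsCell Z1)
    (h2 : E.IsCell Z2) {z : Pt 3} (hz1 : z ∈ Z1) (hz2 : z ∈ Z2) : Z1 = Z2 := by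
  rw [cell_eq_componentIn h1 hz1, cell_eq_componentIn h2 hz2]

set_option maxHeartbeats 1600000 in
lemma no_merge (htf : t ∈ Δ.faces) (hcard : t.card = 3) (fr : Frame t)
    {C : TriangularConfiguration 3} (hC : IsStrongBoundaryOf Δ C) (htC : t ∈ C.faces)
    (heq : connectedComponentIn C.spaceᶜ (Pp Δ t fr)
         = connectedComponentIn C.spaceᶜ (Pp Δ t fr.neg)) : False := by
  classical
  have hEsub : C.faces ⊆ Δ.faces := hC.2
  have ht3 : t ∈ C.triangles := Finset.mem_filter.mpr ⟨htC, hcard⟩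
  set X0 := connectedComponentIn C.spaceᶜ (Pp Δ t fr) with hX0
  set sC' := (C.eraseTriangle t ht3).spaceᶜ with hsC'
  have hPpW := Pp_mem_W htf hcard fr
  have hPpW' := Pp_mem_W htf hcard fr.neg
  have hPp_mem : Pp Δ t fr ∈ C.spaceᶜ :=
    compl_mono_conf hEsub (W_subset_compl htf hcard fr hPpW)
  have hPp'_mem : Pp Δ t fr.neg ∈ C.spaceᶜ :=
    compl_mono_conf hEsub (W_subset_compl htf hcard fr.neg hPpW')
  have hX0cell : C.IsCell X0 := ⟨_, hPp_mem, rfl⟩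
  have hX0open : IsOpen X0 := (space_compl_open C).connectedComponentIn
  have hPpX0 : Pp Δ t fr ∈ X0 := mem_connectedComponentIn hPp_mem
  have hsp : (C.eraseTriangle t ht3).space = Fs C t := erase_space ht3
  have hrelF : convexHull ℝ (↑t : Set (Pt 3)) \ Fs C t = fr.relT :=
    hull_diff_F htf hcard fr htC hEsub
  have hrelT_sub_sC' : fr.relT ⊆ sC' := by
    intro x hx
    rw [hsC', Set.mem_compl_iff, hsp]
    rw [← hrelF] at hx
    exact hx.2
  have hrelT_space : fr.relT ⊆ C.space := fun x hx =>
    hull_subset_space htC (fr.relT_subset_hull hx)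
  have hsC_sub : C.spaceᶜ ⊆ sC' := by
    rw [hsC']
    apply compl_mono_conf
    exact fun s hs => Finset.mem_of_mem_erase hs
  have hsC'_eq : sC' = C.spaceᶜ ∪ fr.relT := by
    apply subset_antisymm
    · intro x hx
      rw [hsC', Set.mem_compl_iff, hsp] at hx
      by_cases hxh : x ∈ convexHull ℝ (↑t : Set (Pt 3))
      · exact Or.inr (hrelF ▸ ⟨hxh, hx⟩)
      · left
        rw [Set.mem_compl_iff, space_eq htC]
        rintro (h | h)
        exacts [hxh h, hx h]
    · rintro x (hx | hx)
      exacts [hsC_sub hx, hrelT_sub_sC' hx]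
  -- the merged region
  set S := X0 ∪ fr.relT with hS
  have hSsub : S ⊆ sC' := by
    rintro x (hx | hx)
    exacts [hsC_sub (connectedComponentIn_subset _ _ hx), hrelT_sub_sC' hx]
  have hSopen : IsOpen S := by
    rw [Metric.isOpen_iff]
    rintro x (hx | hx)
    · obtain ⟨ε, hε, hball⟩ := Metric.isOpen_iff.mp hX0open x hx
      exact ⟨ε, hε, subset_trans hball Set.subset_union_left⟩
    · obtain ⟨ε, hε, h1, h2⟩ := local_ball htf hcard fr hx
      refine ⟨ε, hε, fun y hy => ?_⟩
      rcases lt_trichotomy (fr.G y) 0 with h | h | h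
      · left
        have hyneg : y ∈ ball x ε ∩ {z | 0 < fr.neg.G z} := ⟨hy, by simp [h]⟩
        have := halfball_subset htf hcard fr.neg htC hEsub
          (by rw [fr.neg_relT]; exact hx) hε h1 hyneg
        rw [heq]
        exact this
      · right
        have hyO := h2 hy
        exact ⟨hyO.1, hyO.2.1, hyO.2.2, h⟩
      · left
        exact halfball_subset htf hcard fr htC hEsub hx hε h1 ⟨hy, h⟩
  have hSclos : S ⊆ closure X0 := by
    rintro x (hx | hx)
    exacts [subset_closure hx, relT_subset_closure htf hcard fr htC hEsub hx]
  have hSpre : IsPreconnected S :=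
    isPreconnected_connectedComponentIn.subset_closure Set.subset_union_left hSclos
  have hdiff : sC' \ S = ⋃₀ {Z | C.IsCell Z ∧ Z ≠ X0} := by
    apply subset_antisymm
    · rintro x ⟨hx, hxS⟩
      have hxsC : x ∈ C.spaceᶜ := by
        rw [hsC'_eq] at hx
        rcases hx with h | h
        · exact h
        · exact absurd (Or.inr h : x ∈ S) hxS
      refine ⟨connectedComponentIn C.spaceᶜ x, ⟨⟨x, hxsC, rfl⟩, ?_⟩,
        mem_connectedComponentIn hxsC⟩
      intro h
      exact hxS (Or.inl (h ▸ mem_connectedComponentIn hxsC))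
    · rintro x ⟨Z, ⟨hZ, hZne⟩, hxZ⟩
      refine ⟨hsC_sub (cell_subset hZ hxZ), ?_⟩
      rintro (hx | hx)
      · exact hZne (cell_eq_of_mem hZ hX0cell hxZ hx)
      · exact (cell_subset hZ hxZ) (hrelT_space hx)
  have hVopen : IsOpen (sC' \ S) := by
    rw [hdiff]
    exact isOpen_sUnion fun Z hZ => cell_open hZ.1
  have hS_comp : ∀ x ∈ S, connectedComponentIn sC' x = S := fun x hx =>
    connectedComponentIn_eq_of_clopen hSsub hSopen hVopen hSpre hx
  have hZ_comp : ∀ Z, C.IsCell Z → Z ≠ X0 → ∀ z ∈ Z, connectedComponentIn sC' z = Z := by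
    intro Z hZ hne z hz
    have hVZ : sC' \ Z = S ∪ ⋃₀ {W | C.IsCell W ∧ W ≠ X0 ∧ W ≠ Z} := by
      apply subset_antisymm
      · rintro x ⟨hx, hxZ⟩
        by_cases hxS : x ∈ S
        · exact Or.inl hxS
        · have hxsC : x ∈ C.spaceᶜ := by
            rw [hsC'_eq] at hx
            rcases hx with h | h
            · exact h
            · exact absurd (Or.inr h : x ∈ S) hxS
          refine Or.inr ⟨connectedComponentIn C.spaceᶜ x, ⟨⟨x, hxsC, rfl⟩, ?_, ?_⟩,
            mem_connectedComponentIn hxsC⟩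
          · intro h
            exact hxS (Or.inl (h ▸ mem_connectedComponentIn hxsC))
          · intro h
            exact hxZ (h ▸ mem_connectedComponentIn hxsC)
      · rintro x (hx | ⟨W, ⟨hW, hWne, hWZ⟩, hxW⟩)
        · refine ⟨hSsub hx, fun hxZ => ?_⟩
          rcases hx with h | h
          · exact hne (cell_eq_of_mem hX0cell hZ h hxZ).symm
          · exact (cell_subset hZ hxZ) (hrelT_space h)
        · refine ⟨hsC_sub (cell_subset hW hxW), fun hxZ => ?_⟩
          exact hWZ (cell_eq_of_mem hW hZ hxW hxZ)
    apply connectedComponentIn_eq_of_clopen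
    · exact subset_trans (cell_subset hZ) hsC_sub
    · exact cell_open hZ
    · rw [hVZ]
      exact hSopen.union (isOpen_sUnion fun W hW => cell_open hW.1)
    · rw [cell_eq_componentIn hZ hz]
      exact isPreconnected_connectedComponentIn
    · exact hz
  have hcells' : (C.eraseTriangle t ht3).cells = insert S {Z | C.IsCell Z ∧ Z ≠ X0} := by
    apply subset_antisymm
    · rintro W ⟨x, hx, rfl⟩
      by_cases hxS : x ∈ S
      · rw [hS_comp x hxS]
        exact Set.mem_insert _ _
      · have hxsC : x ∈ C.spaceᶜ := by
          rw [show (C.eraseTriangle t ht3).spaceᶜ = sC' from rfl, hsC'_eq] at hx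
          rcases hx with h | h
          · exact h
          · exact absurd (Or.inr h : x ∈ S) hxS
        have hcell : C.IsCell (connectedComponentIn C.spaceᶜ x) := ⟨x, hxsC, rfl⟩
        have hne : connectedComponentIn C.spaceᶜ x ≠ X0 := by
          intro h
          exact hxS (Or.inl (h ▸ mem_connectedComponentIn hxsC))
        have := hZ_comp _ hcell hne x (mem_connectedComponentIn hxsC)
        rw [show connectedComponentIn (C.eraseTriangle t ht3).spaceᶜ x
            = connectedComponentIn sC' x from rfl, this]
        exact Set.mem_insert_of_mem _ ⟨hcell, hne⟩
    · rintro W (rfl | ⟨hW, hWne⟩)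
      · exact ⟨Pp Δ t fr, hsC_sub hPp_mem, (hS_comp _ (Or.inl hPpX0)).symm⟩
      · obtain ⟨z0, hz0, rfl⟩ := hW
        exact ⟨z0, hsC_sub hz0,
          (hZ_comp _ ⟨z0, hz0, rfl⟩ hWne z0 (mem_connectedComponentIn hz0)).symm⟩
  -- counting
  have hnum2 : 2 ≤ C.numCells := hC.1.1
  have hfin : C.cells.Finite := by
    by_contra h
    have h2 : C.cells.ncard = 0 := Set.Infinite.ncard h
    rw [numCells, h2] at hnum2
    omega
  have hX0mem : X0 ∈ C.cells := hX0cell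
  have hSnot : S ∉ {Z | C.IsCell Z ∧ Z ≠ X0} := by
    rintro ⟨hScell, -⟩
    exact (cell_subset hScell (Or.inr fr.p_mem_relT)) (hrelT_space fr.p_mem_relT)
  have hsetEq : {Z | C.IsCell Z ∧ Z ≠ X0} = C.cells \ {X0} := by
    ext Z; simp [cells, IsCell]; try tauto
  have hcount : (C.eraseTriangle t ht3).numCells = C.numCells := by
    rw [numCells, hcells', hsetEq]
    rw [Set.ncard_insert_of_notMem (by rwa [hsetEq] at hSnot) hfin.diff]
    rw [Set.ncard_diff_singleton_of_mem hX0mem]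
    have : 1 ≤ C.cells.ncard := le_trans (by norm_num) hnum2
    rw [numCells]
    omega
  have hlt := hC.1.2 (C.eraseTriangle t ht3) (by exact Finset.erase_ssubset htC)
  omega

end TriangleProof

open TriangleProof Metric

/-- In a connected triangular configuration `Δ` embedded into `ℝ³`, every
triangle of `Δ` is incident with exactly two cells of `Δ`. -/
theorem triangle_incident_exactly_two_cells (Δ : TriangularConfiguration 3)
    (hΔ : Δ.Connected) (t : Finset (Pt 3)) (ht : t ∈ Δ.triangles) :
    ∃ X Y : Set (Pt 3), X ≠ Y ∧ Δ.IncidentCell t X ∧ Δ.IncidentCell t Y ∧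
      ∀ Z : Set (Pt 3), Δ.IncidentCell t Z → Z = X ∨ Z = Y := by
  classical
  have htf : t ∈ Δ.faces := (Finset.mem_filter.mp ht).1
  have hcard : t.card = 3 := (Finset.mem_filter.mp ht).2
  obtain ⟨fr⟩ := exists_frame hcard (Δ.indep t htf)
  obtain ⟨C, hC, htC, -⟩ := hΔ t ht t ht
  have hPmem : Pp Δ t fr ∈ Δ.spaceᶜ :=
    W_subset_compl htf hcard fr (Pp_mem_W htf hcard fr)
  have hPmem' : Pp Δ t fr.neg ∈ Δ.spaceᶜ :=
    W_subset_compl htf hcard fr.neg (Pp_mem_W htf hcard fr.neg)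
  set X := connectedComponentIn Δ.spaceᶜ (Pp Δ t fr) with hX
  set Y := connectedComponentIn Δ.spaceᶜ (Pp Δ t fr.neg) with hY
  have hXcell : Δ.IsCell X := ⟨_, hPmem, rfl⟩
  have hYcell : Δ.IsCell Y := ⟨_, hPmem', rfl⟩
  have hXY : X ≠ Y := by
    intro h
    apply no_merge htf hcard fr hC htC
    have h0 : Pp Δ t fr.neg ∈ X := by
      rw [h]
      exact mem_connectedComponentIn hPmem'
    have h1 : Pp Δ t fr.neg ∈ connectedComponentIn C.spaceᶜ (Pp Δ t fr) :=
      connectedComponentIn_mono _ (compl_mono_conf hC.2) h0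
    exact connectedComponentIn_eq h1
  have hXinc : Δ.IncidentCell t X :=
    ⟨hXcell, hull_subset_closure htf hcard fr htf (subset_refl _)⟩
  have hYinc : Δ.IncidentCell t Y :=
    ⟨hYcell, hull_subset_closure htf hcard fr.neg htf (subset_refl _)⟩
  refine ⟨X, Y, hXY, hXinc, hYinc, ?_⟩
  rintro Z ⟨hZcell, hZclos⟩
  have hpZ : fr.p ∈ closure Z := hZclos (fr.relT_subset_hull fr.p_mem_relT)
  obtain ⟨ε, hε, h1, h2⟩ := local_ball htf hcard fr fr.p_mem_relT
  obtain ⟨y, hyZ, hyd⟩ := Metric.mem_closure_iff.mp hpZ ε hε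
  have hyball : y ∈ Metric.ball fr.p ε := by
    rw [Metric.mem_ball, dist_comm]; exact hyd
  rcases lt_trichotomy (fr.G y) 0 with h | h | h
  · right
    have hmem : y ∈ Metric.ball fr.p ε ∩ {x | 0 < fr.neg.G x} := ⟨hyball, by simp [h]⟩
    have hyY := halfball_subset htf hcard fr.neg htf (subset_refl _)
      (by rw [fr.neg_relT]; exact fr.p_mem_relT) hε h1 hmem
    exact cell_eq_of_mem hZcell hYcell hyZ hyY
  · exfalso
    have hyO := h2 hyball
    have hyrelT : y ∈ fr.relT := ⟨hyO.1, hyO.2.1, hyO.2.2, h⟩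
    exact (cell_subset hZcell hyZ) (hull_subset_space htf (fr.relT_subset_hull hyrelT))
  · left
    have hyX := halfball_subset htf hcard fr htf (subset_refl _) fr.p_mem_relT hε h1 ⟨hyball, h⟩
    exact cell_eq_of_mem hZcell hXcell hyZ hyX
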